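/- For n = 2, the iterated constant term CT_{x₂} CT_{x₁} of x₁⁻¹(1-x₁)⁻²·x₂⁻¹(1-x₂)⁻²·(x₂-x₁)⁻¹·(1-x₁-x₂)⁻¹ equals 2⁴·Cat(1)·Cat(2) = 32, where the constant term in x₁ is taken first (as a formal Laurent series in x₁ over the field of formal Laurent series in x₂, with (x₂-x₁)⁻¹ and (1-x₁-x₂)⁻¹ expanded as geometric series in x₁/x₂ and (x₁+x₂) respectively). -/

import Mathlib

open PowerSeries HahnSeries

noncomputable def geo {K : Type*} [Field K] (c : K) : PowerSeries K :=
  PowerSeries.mk fun n => c ^ n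

lemma geo_spec {K : Type*} [Field K] (c : K) :
    (1 - PowerSeries.C c * PowerSeries.X) * geo c = 1 := by
  ext n
  rw [sub_mul, one_mul, map_sub]
  cases n with
  | zero => simp [geo]
  | succ n =>
      rw [mul_assoc, PowerSeries.coeff_C_mul, PowerSeries.coeff_succ_X_mul]
      simp [geo, pow_succ, mul_comm]

lemma inv_one_sub_single {K : Type*} [Field K] (c : K) :
    ((1 : LaurentSeries K) - HahnSeries.single 1 c)⁻¹
      = HahnSeries.ofPowerSeries ℤ K (geo c) := by
  apply inv_eq_of_mul_eq_one_right
  have h : (1 : LaurentSeries K) - HahnSeries.single 1 c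
      = HahnSeries.ofPowerSeries ℤ K (1 - PowerSeries.C c * PowerSeries.X) := by
    rw [map_sub, map_one, map_mul, HahnSeries.ofPowerSeries_C, HahnSeries.ofPowerSeries_X,
      HahnSeries.C_apply, HahnSeries.single_mul_single]
    norm_num
  rw [h, ← map_mul, geo_spec, map_one]

lemma single_one_inv {K : Type*} [Field K] :
    (HahnSeries.single (1 : ℤ) (1 : K))⁻¹ = HahnSeries.single (-1) 1 := by
  apply inv_eq_of_mul_eq_one_right
  rw [HahnSeries.single_mul_single]
  norm_num [HahnSeries.single_zero_one]

lemma C_inv {K : Type*} [Field K] (u : K) (hu : u ≠ 0) :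
    (HahnSeries.C u : LaurentSeries K)⁻¹ = HahnSeries.C u⁻¹ := by
  apply inv_eq_of_mul_eq_one_right
  rw [← map_mul, mul_inv_cancel₀ hu, map_one]

lemma factor_eq {K : Type*} [Field K] (u : K) (hu : u ≠ 0) :
    (HahnSeries.C u : LaurentSeries K) - HahnSeries.single 1 1
      = HahnSeries.C u * (1 - HahnSeries.single 1 u⁻¹) := by
  rw [mul_sub, mul_one, HahnSeries.C_apply, HahnSeries.single_mul_single,
    mul_inv_cancel₀ hu, zero_add]

lemma factor_inv {K : Type*} [Field K] (u : K) (hu : u ≠ 0) :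
    ((HahnSeries.C u : LaurentSeries K) - HahnSeries.single 1 1)⁻¹
      = HahnSeries.C u⁻¹ * HahnSeries.ofPowerSeries ℤ K (geo u⁻¹) := by
  rw [factor_eq u hu, mul_inv, C_inv u hu, inv_one_sub_single]

lemma ps_coeff_mul {K : Type*} [Field K] (n : ℕ) (f g : PowerSeries K) :
    PowerSeries.coeff n (f * g)
      = ∑ k ∈ Finset.range (n + 1), PowerSeries.coeff k f * PowerSeries.coeff (n - k) g := by
  rw [PowerSeries.coeff_mul, Finset.Nat.sum_antidiagonal_eq_sum_range_succ_mk]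

lemma geo_coeff {K : Type*} [Field K] (c : K) (n : ℕ) :
    PowerSeries.coeff n (geo c) = c ^ n := PowerSeries.coeff_mk n _

lemma cgg {K : Type*} [Field K] (n : ℕ) :
    PowerSeries.coeff (R := K) n (geo 1 * geo 1) = n + 1 := by
  rw [ps_coeff_mul]
  simp [geo_coeff]

lemma c1P {K : Type*} [Field K] (a b : K) :
    PowerSeries.coeff 1 (geo 1 * geo 1 * geo a * geo b) = 2 + a + b := by
  have h0gg : PowerSeries.coeff 0 (geo (1:K) * geo 1) = 1 := by
    rw [ps_coeff_mul]; simp [geo_coeff]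
  have h0ggg : PowerSeries.coeff 0 (geo (1:K) * geo 1 * geo a) = 1 := by
    rw [ps_coeff_mul]; simp [geo_coeff, h0gg]
  have h1ggg : PowerSeries.coeff 1 (geo (1:K) * geo 1 * geo a) = 2 + a := by
    rw [ps_coeff_mul, Finset.sum_range_succ, Finset.sum_range_one, h0gg, cgg, geo_coeff,
      geo_coeff]
    push_cast; ring
  rw [ps_coeff_mul, Finset.sum_range_succ, Finset.sum_range_one, h0ggg, h1ggg, geo_coeff,
    geo_coeff]
  ring

lemma cg3 (n : ℕ) (hn : n ≤ 3) :
    PowerSeries.coeff (R := ℚ) n (geo 1 * geo 1 * geo 1) = (n + 1) * (n + 2) / 2 := by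
  rw [ps_coeff_mul]
  simp only [cgg, geo_coeff, one_pow, mul_one]
  interval_cases n <;>
    simp [Finset.sum_range_succ, Finset.sum_range_one] <;> norm_num

lemma c2g4 : PowerSeries.coeff (R := ℚ) 2 (geo 1 * geo 1 * geo 1 * geo 1) = 10 := by
  rw [ps_coeff_mul, Finset.sum_range_succ, Finset.sum_range_succ, Finset.sum_range_one,
    cg3 0 (by norm_num), cg3 1 (by norm_num), cg3 2 (by norm_num)]
  simp [geo_coeff]
  norm_num

lemma single_mul_of_coeff_zero {K : Type*} [Field K] (a : ℤ) (n : ℕ) (h : (n : ℤ) + a = 0)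
    (c : K) (P : PowerSeries K) :
    (HahnSeries.single a c * HahnSeries.ofPowerSeries ℤ K P).coeff 0
      = c * PowerSeries.coeff n P := by
  rw [← h, HahnSeries.coeff_single_mul_add, HahnSeries.ofPowerSeries_apply_coeff]

/-- The n = 2 case of the Mészáros–Morales conjecture:
`CT_{x₂} CT_{x₁} [x₁⁻¹(1-x₁)⁻² x₂⁻¹(1-x₂)⁻² (x₂-x₁)⁻¹ (1-x₁-x₂)⁻¹] = 2⁴·Cat(1)·Cat(2) = 32`,
where the inner variable `x₁` ranges over Laurent series with coefficients in the field
of Laurent series in `x₂` (so inverses are the iterated Laurent expansions with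
`|x₁| < |x₂|`), and `CT` picks out the coefficient of degree 0. -/
theorem stmt_4 :
    let x₁ : LaurentSeries (LaurentSeries ℚ) := HahnSeries.single 1 1
    let x₂ : LaurentSeries (LaurentSeries ℚ) := HahnSeries.C (HahnSeries.single 1 1)
    (((x₁⁻¹ * ((1 - x₁) ^ 2)⁻¹ * x₂⁻¹ * ((1 - x₂) ^ 2)⁻¹ *
        (x₂ - x₁)⁻¹ * (1 - x₁ - x₂)⁻¹).coeff 0).coeff 0) = 32 ∧
    (32 : ℚ) = 2 ^ 4 * (1 / ((1 : ℚ) + 1) * (Nat.choose 2 1 : ℚ)) *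
        (1 / ((2 : ℚ) + 1) * (Nat.choose 4 2 : ℚ)) := by
  intro x₁ x₂
  refine ⟨?_, by norm_num [Nat.choose]⟩
  have ht0 : (HahnSeries.single 1 1 : LaurentSeries ℚ) ≠ 0 :=
    HahnSeries.single_ne_zero one_ne_zero
  have h1t : (1 : LaurentSeries ℚ) - HahnSeries.single 1 1 ≠ 0 := by
    intro h
    have h2 := congrArg (fun y : LaurentSeries ℚ => y.coeff 0) h
    simp only [HahnSeries.coeff_sub, HahnSeries.coeff_one, HahnSeries.coeff_single,
      HahnSeries.coeff_zero] at h2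
    norm_num at h2
  set t : LaurentSeries ℚ := HahnSeries.single 1 1 with ht_def
  -- the six factors
  have e1 : (x₁ : LaurentSeries (LaurentSeries ℚ))⁻¹ = HahnSeries.single (-1) 1 :=
    single_one_inv
  have e2 : (((1 : LaurentSeries (LaurentSeries ℚ)) - x₁) ^ 2)⁻¹
      = (HahnSeries.ofPowerSeries ℤ (LaurentSeries ℚ) (geo 1)) ^ 2 := by
    rw [← inv_pow (1 - x₁) 2]
    have h2 : ((1 : LaurentSeries (LaurentSeries ℚ)) - x₁)⁻¹
        = HahnSeries.ofPowerSeries ℤ (LaurentSeries ℚ) (geo 1) := inv_one_sub_single 1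
    rw [h2]
  have e3 : (x₂ : LaurentSeries (LaurentSeries ℚ))⁻¹ = HahnSeries.C t⁻¹ := C_inv t ht0
  have e4 : (((1 : LaurentSeries (LaurentSeries ℚ)) - x₂) ^ 2)⁻¹
      = HahnSeries.C (((1 - t) ^ 2)⁻¹) := by
    have h2 : (1 : LaurentSeries (LaurentSeries ℚ)) - x₂ = HahnSeries.C (1 - t) := by
      rw [map_sub, map_one]
    rw [h2, ← map_pow]
    exact C_inv _ (pow_ne_zero 2 h1t)
  have e5 : ((x₂ : LaurentSeries (LaurentSeries ℚ)) - x₁)⁻¹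
      = HahnSeries.C t⁻¹ * HahnSeries.ofPowerSeries ℤ (LaurentSeries ℚ) (geo t⁻¹) :=
    factor_inv t ht0
  have e6 : ((1 : LaurentSeries (LaurentSeries ℚ)) - x₁ - x₂)⁻¹
      = HahnSeries.C (1 - t)⁻¹
          * HahnSeries.ofPowerSeries ℤ (LaurentSeries ℚ) (geo (1 - t)⁻¹) := by
    have h2 : (1 : LaurentSeries (LaurentSeries ℚ)) - x₁ - x₂
        = HahnSeries.C (1 - t) - HahnSeries.single 1 1 := by
      rw [map_sub, map_one]
      show (1 : LaurentSeries (LaurentSeries ℚ)) - x₁ - x₂ = 1 - x₂ - x₁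
      ring
    rw [h2]
    exact factor_inv _ h1t
  rw [e1, e2, e3, e4, e5, e6]
  have hmain : (HahnSeries.single (-1) 1 : LaurentSeries (LaurentSeries ℚ)) *
        (HahnSeries.ofPowerSeries ℤ (LaurentSeries ℚ) (geo 1)) ^ 2 *
        HahnSeries.C t⁻¹ * HahnSeries.C (((1 - t) ^ 2)⁻¹) *
        (HahnSeries.C t⁻¹ * HahnSeries.ofPowerSeries ℤ (LaurentSeries ℚ) (geo t⁻¹)) *
        (HahnSeries.C (1 - t)⁻¹
          * HahnSeries.ofPowerSeries ℤ (LaurentSeries ℚ) (geo (1 - t)⁻¹))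
      = HahnSeries.single (-1) 1 * HahnSeries.C t⁻¹ * HahnSeries.C (((1 - t) ^ 2)⁻¹) *
          HahnSeries.C t⁻¹ * HahnSeries.C (1 - t)⁻¹ *
          (HahnSeries.ofPowerSeries ℤ (LaurentSeries ℚ) (geo 1) *
            HahnSeries.ofPowerSeries ℤ (LaurentSeries ℚ) (geo 1) *
            HahnSeries.ofPowerSeries ℤ (LaurentSeries ℚ) (geo t⁻¹) *
            HahnSeries.ofPowerSeries ℤ (LaurentSeries ℚ) (geo (1 - t)⁻¹)) := by
    ring
  have hsingle : (HahnSeries.single (-1) 1 : LaurentSeries (LaurentSeries ℚ)) *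
        HahnSeries.C t⁻¹ * HahnSeries.C (((1 - t) ^ 2)⁻¹) *
        HahnSeries.C t⁻¹ * HahnSeries.C (1 - t)⁻¹
      = HahnSeries.single (-1) (t⁻¹ * ((1 - t) ^ 2)⁻¹ * t⁻¹ * (1 - t)⁻¹) := by
    simp only [HahnSeries.C_apply, HahnSeries.single_mul_single, one_mul]
    norm_num
  have hof : (HahnSeries.ofPowerSeries ℤ (LaurentSeries ℚ) (geo 1) *
        HahnSeries.ofPowerSeries ℤ (LaurentSeries ℚ) (geo 1) *
        HahnSeries.ofPowerSeries ℤ (LaurentSeries ℚ) (geo t⁻¹) *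
        HahnSeries.ofPowerSeries ℤ (LaurentSeries ℚ) (geo (1 - t)⁻¹))
      = HahnSeries.ofPowerSeries ℤ (LaurentSeries ℚ)
          (geo 1 * geo 1 * geo t⁻¹ * geo (1 - t)⁻¹) := by
    rw [← map_mul (HahnSeries.ofPowerSeries ℤ (LaurentSeries ℚ)),
      ← map_mul (HahnSeries.ofPowerSeries ℤ (LaurentSeries ℚ)),
      ← map_mul (HahnSeries.ofPowerSeries ℤ (LaurentSeries ℚ))]
  rw [hmain, hsingle, hof, single_mul_of_coeff_zero (-1) 1 (by norm_num), c1P]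
  -- outer constant term
  have o1 : t⁻¹ = (HahnSeries.single (-1) 1 : LaurentSeries ℚ) := by
    rw [ht_def]; exact single_one_inv
  have o3 : ((1 : LaurentSeries ℚ) - t)⁻¹ = HahnSeries.ofPowerSeries ℤ ℚ (geo 1) := by
    rw [ht_def]; exact inv_one_sub_single 1
  have o2 : (((1 : LaurentSeries ℚ) - t) ^ 2)⁻¹
      = (HahnSeries.ofPowerSeries ℤ ℚ (geo 1)) ^ 2 := by
    rw [← inv_pow (1 - t) 2, o3]
  rw [o1, o2, o3]
  set s : LaurentSeries ℚ := HahnSeries.single (-1) 1 with hs_def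
  set G : LaurentSeries ℚ := HahnSeries.ofPowerSeries ℤ ℚ (geo 1) with hG_def
  have h2C : (2 : LaurentSeries ℚ) = HahnSeries.C (2 : ℚ) :=
    (map_ofNat (HahnSeries.C : ℚ →+* HahnSeries ℤ ℚ) 2).symm
  have hV : s * G ^ 2 * s * G * (2 + s + G)
      = (s * s * HahnSeries.C (2:ℚ)) * (G * G * G) + (s * s) * (G * G * G * G)
          + (s * s * s) * (G * G * G) := by
    rw [h2C]
    ring
  rw [hV]
  have k1 : (s * s * HahnSeries.C (2:ℚ)) * (G * G * G)
      = HahnSeries.single (-2 : ℤ) (2 : ℚ) *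
          HahnSeries.ofPowerSeries ℤ ℚ (geo 1 * geo 1 * geo 1) := by
    rw [hs_def, hG_def, ← map_mul (HahnSeries.ofPowerSeries ℤ ℚ),
      ← map_mul (HahnSeries.ofPowerSeries ℤ ℚ)]
    simp only [HahnSeries.C_apply, HahnSeries.single_mul_single, one_mul]
    norm_num
  have k2 : (s * s) * (G * G * G * G)
      = HahnSeries.single (-2 : ℤ) (1 : ℚ) *
          HahnSeries.ofPowerSeries ℤ ℚ (geo 1 * geo 1 * geo 1 * geo 1) := by
    rw [hs_def, hG_def, ← map_mul (HahnSeries.ofPowerSeries ℤ ℚ),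
      ← map_mul (HahnSeries.ofPowerSeries ℤ ℚ), ← map_mul (HahnSeries.ofPowerSeries ℤ ℚ),
      HahnSeries.single_mul_single]
    norm_num
  have k3 : (s * s * s) * (G * G * G)
      = HahnSeries.single (-3 : ℤ) (1 : ℚ) *
          HahnSeries.ofPowerSeries ℤ ℚ (geo 1 * geo 1 * geo 1) := by
    rw [hs_def, hG_def, ← map_mul (HahnSeries.ofPowerSeries ℤ ℚ),
      ← map_mul (HahnSeries.ofPowerSeries ℤ ℚ), HahnSeries.single_mul_single,
      HahnSeries.single_mul_single]
    norm_num
  rw [k1, k2, k3, HahnSeries.coeff_add, HahnSeries.coeff_add,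
    single_mul_of_coeff_zero (-2) 2 (by norm_num),
    single_mul_of_coeff_zero (-2) 2 (by norm_num),
    single_mul_of_coeff_zero (-3) 3 (by norm_num),
    cg3 2 (by norm_num), cg3 3 (by norm_num), c2g4]
  norm_num
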